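/- Under the family elliptical potential setting, Σ_{i∈I} Σ_{m=1}^{M_i} n^i_m · ‖c^i_m‖_{(V^i_m)⁻¹} ≤ √(2·d·|I|·T·log(1 + T/(λ·d))). -/

import Mathlib

open Matrix Finset

lemma aux_le_two_mul_log {x : ℝ} (h0 : 0 ≤ x) (h1 : x ≤ 1) :
    x ≤ 2 * Real.log (1 + x) := by
  have hexp : Real.exp (x / 2) ≤ 1 + x := by
    have hc := convexOn_exp.2 (Set.mem_univ (0:ℝ)) (Set.mem_univ (1:ℝ))
      (by linarith : (0:ℝ) ≤ 1 - x/2) (by linarith : (0:ℝ) ≤ x/2) (by ring)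
    simp only [smul_eq_mul, mul_zero, mul_one, zero_add, Real.exp_zero] at hc
    nlinarith [Real.exp_one_lt_d9]
  have h2 : x / 2 ≤ Real.log (1 + x) :=
    (Real.le_log_iff_exp_le (by linarith)).mpr hexp
  linarith

lemma aux_psd_smul_vecMulVec {d : ℕ} (t : ℝ) (ht : 0 ≤ t) (c : Fin d → ℝ) :
    (t • vecMulVec c c).PosSemidef := by
  refine PosSemidef.of_dotProduct_mulVec_nonneg ?_ ?_
  · ext i j
    simp [conjTranspose, vecMulVec_apply, mul_comm]
  · intro x
    have h : dotProduct (star x) ((t • vecMulVec c c) *ᵥ x) = t * (c ⬝ᵥ x) ^ 2 := by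
      simp only [star_trivial, smul_mulVec, dotProduct_smul, smul_eq_mul]
      congr 1
      rw [sq, dotProduct, dotProduct, Finset.sum_mul_sum]
      simp only [mulVec, dotProduct, vecMulVec_apply, Finset.mul_sum]
      exact Finset.sum_congr rfl fun i _ => Finset.sum_congr rfl fun j _ => by ring
    rw [h]
    positivity

lemma aux_trace_eq_sum_eigenvalues {d : ℕ} {A : Matrix (Fin d) (Fin d) ℝ}
    (hA : A.IsHermitian) : A.trace = ∑ i, hA.eigenvalues i := by
  conv_lhs => rw [hA.spectral_theorem]
  rw [Unitary.conjStarAlgAut_apply]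
  rw [trace_mul_comm, ← Matrix.mul_assoc,
    (Matrix.mem_unitaryGroup_iff'.mp (hA.eigenvectorUnitary).2), Matrix.one_mul,
    trace_diagonal]
  simp

lemma aux_det_le_pow {d : ℕ} (hd : 1 ≤ d) {A : Matrix (Fin d) (Fin d) ℝ}
    (hA : A.PosSemidef) : A.det ≤ (A.trace / d) ^ d ∧ 0 ≤ A.trace := by
  have hH := hA.isHermitian
  have heig : ∀ i, 0 ≤ hH.eigenvalues i := hA.eigenvalues_nonneg
  have htr : A.trace = ∑ i, hH.eigenvalues i := aux_trace_eq_sum_eigenvalues hH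
  have htr0 : 0 ≤ A.trace := htr ▸ Finset.sum_nonneg fun i _ => heig i
  refine ⟨?_, htr0⟩
  have hdet : A.det = ∏ i, hH.eigenvalues i := by
    simpa using hH.det_eq_prod_eigenvalues
  have hd0 : (d : ℝ) ≠ 0 := by positivity
  have hAM := Real.geom_mean_le_arith_mean_weighted Finset.univ
    (fun _ => (d : ℝ)⁻¹) hH.eigenvalues (fun _ _ => by positivity)
    (by simp [Finset.card_univ, mul_comm]; field_simp)
    (fun i _ => heig i)
  -- hAM : ∏ i, eigenvalues i ^ (d⁻¹ : ℝ) ≤ ∑ i, d⁻¹ * eigenvalues i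
  have hP0 : 0 ≤ ∏ i, hH.eigenvalues i ^ ((d : ℝ)⁻¹) :=
    Finset.prod_nonneg fun i _ => Real.rpow_nonneg (heig i) _
  have hpow := pow_le_pow_left₀ hP0 hAM d
  have hL : (∏ i, hH.eigenvalues i ^ ((d : ℝ)⁻¹)) ^ d = ∏ i, hH.eigenvalues i := by
    rw [← Finset.prod_pow]
    refine Finset.prod_congr rfl fun i _ => ?_
    rw [← Real.rpow_natCast (hH.eigenvalues i ^ ((d : ℝ)⁻¹)) d, ← Real.rpow_mul (heig i)]
    rw [inv_mul_cancel₀ hd0, Real.rpow_one]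
  have hR : (∑ i, (d : ℝ)⁻¹ * hH.eigenvalues i) = A.trace / d := by
    rw [htr, ← Finset.mul_sum]; ring
  rw [hL, hR] at hpow
  rw [hdet]
  exact hpow

lemma aux_det_step {d : ℕ} {A : Matrix (Fin d) (Fin d) ℝ} (hA : A.PosDef)
    (t : ℝ) (c : Fin d → ℝ) :
    (A + t • vecMulVec c c).det = A.det * (1 + t * (c ⬝ᵥ A⁻¹ *ᵥ c)) := by
  have h1 : t • vecMulVec c c = vecMulVec (t • c) c := by
    ext i j
    simp [vecMulVec_apply, mul_assoc]
  rw [h1, vecMulVec_eq Unit, det_add_replicateCol_mul_replicateRow hA.det_pos.ne'.isUnit]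
  congr 1
  rw [det_unique]
  simp only [Matrix.add_apply, Matrix.one_apply_eq, Matrix.mul_apply, replicateRow_apply, replicateCol_apply,
    Pi.smul_apply, smul_eq_mul]
  congr 1
  simp only [mulVec, dotProduct, Finset.mul_sum, Finset.sum_mul]
  rw [Finset.sum_comm]
  exact Finset.sum_congr rfl fun j _ => Finset.sum_congr rfl fun k _ => by ring

lemma aux_trace_vecMulVec {d : ℕ} (c : Fin d → ℝ) :
    (vecMulVec c c).trace = ∑ i, c i ^ 2 := by
  simp [Matrix.trace, vecMulVec_apply, Matrix.diag, sq]

lemma aux_family {d : ℕ} (lam : ℝ) (hlam : 1 ≤ lam)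
    (Mi : ℕ) (c : ℕ → Fin d → ℝ) (n : ℕ → ℕ) (V : ℕ → Matrix (Fin d) (Fin d) ℝ)
    (hV1 : V 1 = lam • (1 : Matrix (Fin d) (Fin d) ℝ))
    (hVrec : ∀ m, 1 ≤ m → m ≤ Mi → V (m+1) = V m + (n m : ℝ) • vecMulVec (c m) (c m))
    (hc : ∀ m, 1 ≤ m → m ≤ Mi → Real.sqrt (∑ k, c m k ^ 2) ≤ 1) :
    ∀ k, k ≤ Mi → (V (k+1)).PosDef ∧
      (V (k+1)).det = lam ^ d *
        ∏ j ∈ Finset.Icc 1 k, (1 + (n j : ℝ) * (c j ⬝ᵥ (V j)⁻¹ *ᵥ c j)) ∧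
      (V (k+1)).trace ≤ lam * d + ∑ j ∈ Finset.Icc 1 k, (n j : ℝ) := by
  intro k
  induction k with
  | zero =>
    intro _
    have hpd : (V 1).PosDef := by
      rw [hV1, smul_one_eq_diagonal]
      exact posDef_diagonal_iff.mpr fun _ => by linarith
    refine ⟨hpd, ?_, ?_⟩
    · simp [hV1, Matrix.det_smul]
    · simp [hV1, Matrix.trace_smul, Matrix.trace_one, smul_eq_mul]
  | succ k ih =>
    intro hk
    obtain ⟨hpd, hdet, htr⟩ := ih (by omega)
    have hrec := hVrec (k+1) (by omega) hk
    have hpd' : (V (k+1+1)).PosDef := by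
      rw [hrec]
      exact hpd.add_posSemidef
        (aux_psd_smul_vecMulVec _ (by positivity) _)
    refine ⟨hpd', ?_, ?_⟩
    · rw [hrec, aux_det_step hpd, hdet,
        Finset.prod_Icc_succ_top (by omega : 1 ≤ k + 1)]
      ring
    · have hcsum : ∑ i, c (k+1) i ^ 2 ≤ 1 := by
        have h := hc (k+1) (by omega) hk
        have h0 : (0:ℝ) ≤ ∑ i, c (k+1) i ^ 2 := by positivity
        nlinarith [Real.sq_sqrt h0, Real.sqrt_nonneg (∑ i, c (k+1) i ^ 2)]
      have : (V (k+1+1)).trace = (V (k+1)).trace + (n (k+1) : ℝ) * ∑ i, c (k+1) i ^ 2 := by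
        rw [hrec, Matrix.trace_add, Matrix.trace_smul, aux_trace_vecMulVec, smul_eq_mul]
      rw [this, Finset.sum_Icc_succ_top (by omega : 1 ≤ k + 1)]
      have hn0 : (0:ℝ) ≤ (n (k+1) : ℝ) := by positivity
      nlinarith

lemma aux_family_sum {d : ℕ} (hd : 1 ≤ d) (lam : ℝ) (hlam : 1 ≤ lam)
    (Mi : ℕ) (c : ℕ → Fin d → ℝ) (n : ℕ → ℕ) (V : ℕ → Matrix (Fin d) (Fin d) ℝ)
    (hV1 : V 1 = lam • (1 : Matrix (Fin d) (Fin d) ℝ))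
    (hVrec : ∀ m, 1 ≤ m → m ≤ Mi → V (m+1) = V m + (n m : ℝ) • vecMulVec (c m) (c m))
    (hc : ∀ m, 1 ≤ m → m ≤ Mi → Real.sqrt (∑ k, c m k ^ 2) ≤ 1)
    (hsmall : ∀ m, 1 ≤ m → m ≤ Mi → (n m : ℝ) * (c m ⬝ᵥ (V m)⁻¹ *ᵥ c m) ≤ 1)
    (T : ℝ) (hτT : ∑ j ∈ Finset.Icc 1 Mi, (n j : ℝ) ≤ T) :
    ∑ m ∈ Finset.Icc 1 Mi, (n m : ℝ) * (c m ⬝ᵥ (V m)⁻¹ *ᵥ c m) ≤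
      2 * d * Real.log (1 + T / (lam * d)) := by
  set w : ℕ → ℝ := fun m => c m ⬝ᵥ (V m)⁻¹ *ᵥ c m with hw
  set τ : ℝ := ∑ j ∈ Finset.Icc 1 Mi, (n j : ℝ) with hτ
  have hτ0 : 0 ≤ τ := Finset.sum_nonneg fun j _ => by positivity
  have hT0 : 0 ≤ T := le_trans hτ0 hτT
  have hlam0 : (0:ℝ) < lam := by linarith
  have hd0 : (0:ℝ) < (d:ℝ) := by exact_mod_cast hd.trans_lt' (by norm_num)
  obtain ⟨hpd, hdet, htr⟩ := aux_family lam hlam Mi c n V hV1 hVrec hc Mi le_rfl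
  have hwnn : ∀ m ∈ Finset.Icc 1 Mi, 0 ≤ w m := by
    intro m hm
    rw [Finset.mem_Icc] at hm
    have hpdm : (V m).PosDef := by
      have h := (aux_family lam hlam Mi c n V hV1 hVrec hc (m-1) (by omega)).1
      have he : m - 1 + 1 = m := by omega
      rwa [he] at h
    have := hpdm.inv.posSemidef.dotProduct_mulVec_nonneg (c m)
    simpa [hw] using this
  have hnw : ∀ m ∈ Finset.Icc 1 Mi, 0 ≤ (n m : ℝ) * w m := fun m hm =>
    mul_nonneg (by positivity) (hwnn m hm)
  -- determinant bound
  obtain ⟨hdle, htr0⟩ := aux_det_le_pow hd hpd.posSemidef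
  have hP1 : ∀ m ∈ Finset.Icc 1 Mi, (0:ℝ) < 1 + (n m : ℝ) * w m := fun m hm => by
    have := hnw m hm; linarith
  have hPpos : (0:ℝ) < ∏ j ∈ Finset.Icc 1 Mi, (1 + (n j : ℝ) * w j) :=
    Finset.prod_pos hP1
  have hkey : lam ^ d * ∏ j ∈ Finset.Icc 1 Mi, (1 + (n j : ℝ) * w j) ≤
      lam ^ d * (1 + τ / (lam * d)) ^ d := by
    calc lam ^ d * ∏ j ∈ Finset.Icc 1 Mi, (1 + (n j : ℝ) * w j)
        = (V (Mi+1)).det := hdet.symm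
      _ ≤ ((V (Mi+1)).trace / d) ^ d := hdle
      _ ≤ (lam + τ / d) ^ d := by
          apply pow_le_pow_left₀ (by positivity)
          rw [div_le_iff₀ hd0]
          calc (V (Mi+1)).trace ≤ lam * d + τ := htr
            _ = (lam + τ / d) * d := by field_simp
      _ = lam ^ d * (1 + τ / (lam * d)) ^ d := by
          rw [← mul_pow]
          congr 1
          field_simp
  have hPle : ∏ j ∈ Finset.Icc 1 Mi, (1 + (n j : ℝ) * w j) ≤ (1 + τ / (lam * d)) ^ d :=
    le_of_mul_le_mul_left hkey (by positivity)
  have hlog : ∑ m ∈ Finset.Icc 1 Mi, Real.log (1 + (n m : ℝ) * w m) ≤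
      d * Real.log (1 + T / (lam * d)) := by
    rw [← Real.log_prod (fun m hm => (hP1 m hm).ne')]
    calc Real.log (∏ j ∈ Finset.Icc 1 Mi, (1 + (n j : ℝ) * w j))
        ≤ Real.log ((1 + τ / (lam * d)) ^ d) := Real.log_le_log hPpos hPle
      _ = d * Real.log (1 + τ / (lam * d)) := by rw [Real.log_pow]
      _ ≤ d * Real.log (1 + T / (lam * d)) := by
          apply mul_le_mul_of_nonneg_left _ (by positivity)
          apply Real.log_le_log (by positivity)
          gcongr
  calc ∑ m ∈ Finset.Icc 1 Mi, (n m : ℝ) * w m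
      ≤ ∑ m ∈ Finset.Icc 1 Mi, 2 * Real.log (1 + (n m : ℝ) * w m) := by
        apply Finset.sum_le_sum
        intro m hm
        rw [Finset.mem_Icc] at hm
        exact aux_le_two_mul_log (hnw m (Finset.mem_Icc.mpr hm)) (hsmall m hm.1 hm.2)
    _ = 2 * ∑ m ∈ Finset.Icc 1 Mi, Real.log (1 + (n m : ℝ) * w m) := by
        rw [Finset.mul_sum]
    _ ≤ 2 * (d * Real.log (1 + T / (lam * d))) := by linarith
    _ = 2 * d * Real.log (1 + T / (lam * d)) := by ring

/-- Family elliptical potential lemma: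
`∑_{i∈I} ∑_{m=1}^{M_i} n^i_m ‖c^i_m‖_{(V^i_m)⁻¹} ≤ √(2 d |I| T log (1 + T/(λ d)))`. -/
theorem family_elliptical_potential {ι : Type*} [Fintype ι] [Nonempty ι]
    {d : ℕ} (hd : 1 ≤ d) (lam : ℝ) (hlam : 1 ≤ lam)
    (M : ι → ℕ) (c : ι → ℕ → Fin d → ℝ) (n : ι → ℕ → ℕ)
    (V : ι → ℕ → Matrix (Fin d) (Fin d) ℝ)
    (hc : ∀ i m, 1 ≤ m → m ≤ M i → Real.sqrt (∑ k, c i m k ^ 2) ≤ 1)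
    (hV1 : ∀ i, V i 1 = lam • (1 : Matrix (Fin d) (Fin d) ℝ))
    (hVrec : ∀ i m, 1 ≤ m → m ≤ M i →
      V i (m + 1) = V i m + (n i m : ℝ) • vecMulVec (c i m) (c i m))
    (hsmall : ∀ i m, 1 ≤ m → m ≤ M i →
      (n i m : ℝ) * (c i m ⬝ᵥ (V i m)⁻¹.mulVec (c i m)) ≤ 1)
    (T : ℝ) (hT : T = ∑ i, ∑ m ∈ Finset.Icc 1 (M i), (n i m : ℝ)) :
    ∑ i, ∑ m ∈ Finset.Icc 1 (M i),
        (n i m : ℝ) * Real.sqrt (c i m ⬝ᵥ (V i m)⁻¹.mulVec (c i m)) ≤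
      Real.sqrt (2 * d * (Fintype.card ι) * T * Real.log (1 + T / (lam * d))) := by
  classical
  set w : ι → ℕ → ℝ := fun i m => c i m ⬝ᵥ (V i m)⁻¹ *ᵥ c i m with hw
  have hlam0 : (0:ℝ) < lam := by linarith
  have hT0 : 0 ≤ T := hT ▸ Finset.sum_nonneg fun i _ =>
    Finset.sum_nonneg fun m _ => by positivity
  -- nonnegativity of w on the relevant range
  have hwnn : ∀ i, ∀ m ∈ Finset.Icc 1 (M i), 0 ≤ w i m := by
    intro i m hm
    rw [Finset.mem_Icc] at hm
    have hpdm : (V i m).PosDef := by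
      have h := (aux_family lam hlam (M i) (c i) (n i) (V i) (hV1 i)
        (fun m h1 h2 => hVrec i m h1 h2) (fun m h1 h2 => hc i m h1 h2) (m-1) (by omega)).1
      have he : m - 1 + 1 = m := by omega
      rwa [he] at h
    have := hpdm.inv.posSemidef.dotProduct_mulVec_nonneg (c i m)
    simpa [hw] using this
  -- per-family bound on ∑ n * w
  have hfam : ∀ i, ∑ m ∈ Finset.Icc 1 (M i), (n i m : ℝ) * w i m ≤
      2 * d * Real.log (1 + T / (lam * d)) := by
    intro i
    apply aux_family_sum hd lam hlam (M i) (c i) (n i) (V i) (hV1 i)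
      (fun m h1 h2 => hVrec i m h1 h2) (fun m h1 h2 => hc i m h1 h2)
      (fun m h1 h2 => hsmall i m h1 h2)
    rw [hT]
    exact Finset.single_le_sum (f := fun i => ∑ m ∈ Finset.Icc 1 (M i), (n i m : ℝ))
      (fun j _ => Finset.sum_nonneg fun m _ => by positivity) (Finset.mem_univ i)
  set L : ℝ := Real.log (1 + T / (lam * d)) with hL
  have hL0 : 0 ≤ L := by
    apply Real.log_nonneg
    have h : 0 ≤ T / (lam * d) := by positivity
    linarith
  set S : ℝ := ∑ i, ∑ m ∈ Finset.Icc 1 (M i), (n i m : ℝ) * w i m with hS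
  have hSle : S ≤ (Fintype.card ι) * (2 * d * L) := by
    rw [hS]
    calc ∑ i, ∑ m ∈ Finset.Icc 1 (M i), (n i m : ℝ) * w i m
        ≤ ∑ _i : ι, 2 * (d:ℝ) * L := Finset.sum_le_sum fun i _ => hfam i
      _ = (Fintype.card ι) * (2 * d * L) := by
        rw [Finset.sum_const, nsmul_eq_mul, Finset.card_univ]
  -- Cauchy–Schwarz on the sigma type
  set A : ℝ := ∑ i, ∑ m ∈ Finset.Icc 1 (M i),
    (n i m : ℝ) * Real.sqrt (w i m) with hA
  have hA0 : 0 ≤ A := Finset.sum_nonneg fun i _ => Finset.sum_nonneg fun m _ =>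
    mul_nonneg (by positivity) (Real.sqrt_nonneg _)
  have hCS : A ^ 2 ≤ T * S := by
    rw [hA, hT, hS]
    rw [Finset.sum_sigma' Finset.univ (fun i => Finset.Icc 1 (M i))
        (fun i m => (n i m : ℝ) * Real.sqrt (w i m)),
      Finset.sum_sigma' Finset.univ (fun i => Finset.Icc 1 (M i))
        (fun i m => (n i m : ℝ)),
      Finset.sum_sigma' Finset.univ (fun i => Finset.Icc 1 (M i))
        (fun i m => (n i m : ℝ) * w i m)]
    apply Finset.sum_sq_le_sum_mul_sum_of_sq_eq_mul
    · intro p _; positivity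
    · intro p hp
      rw [Finset.mem_sigma] at hp
      exact mul_nonneg (by positivity) (hwnn p.1 p.2 hp.2)
    · intro p hp
      rw [Finset.mem_sigma] at hp
      rw [mul_pow, Real.sq_sqrt (hwnn p.1 p.2 hp.2)]
      ring
  have hTS : T * S ≤ 2 * d * (Fintype.card ι) * T * L := by
    calc T * S ≤ T * ((Fintype.card ι) * (2 * d * L)) := by
          apply mul_le_mul_of_nonneg_left hSle hT0
      _ = 2 * d * (Fintype.card ι) * T * L := by ring
  calc A = Real.sqrt (A ^ 2) := (Real.sqrt_sq hA0).symm
    _ ≤ Real.sqrt (2 * d * (Fintype.card ι) * T * L) :=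
        Real.sqrt_le_sqrt (hCS.trans hTS)
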